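/- For real numbers q and α with 0 < α < q (so that both Gamma arguments are positive), ∫₀^∞ (r/(1+r²))^q · r^{-(α+1)} dr = Γ((q−α)/2) · Γ((q+α)/2) / (2 Γ(q)). -/

import Mathlib

open Real MeasureTheory

lemma realBeta (a b : ℝ) (ha : 0 < a) (hb : 0 < b) :
    ∫ x in Set.Ioo (0:ℝ) 1, x ^ (a - 1) * (1 - x) ^ (b - 1)
      = Real.Gamma a * Real.Gamma b / Real.Gamma (a + b) := by
  have hbeta : Complex.betaIntegral a b
      = ((∫ x in Set.Ioo (0:ℝ) 1, x ^ (a - 1) * (1 - x) ^ (b - 1) : ℝ) : ℂ) := by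
    rw [Complex.betaIntegral, intervalIntegral.integral_of_le zero_le_one,
      ← MeasureTheory.integral_Ioc_eq_integral_Ioo]
    refine Eq.trans (setIntegral_congr_fun measurableSet_Ioc fun x hx => ?_)
      (integral_ofReal (𝕜 := ℂ))
    have hx0 : (0:ℝ) ≤ x := hx.1.le
    have hx1 : (0:ℝ) ≤ 1 - x := by linarith [hx.2]
    rw [show ((a:ℂ) - 1) = ((a - 1 : ℝ) : ℂ) by push_cast; ring,
      show ((b:ℂ) - 1) = ((b - 1 : ℝ) : ℂ) by push_cast; ring,
      show (1 - (x:ℂ)) = ((1 - x : ℝ) : ℂ) by push_cast; ring,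
      ← Complex.ofReal_cpow hx0, ← Complex.ofReal_cpow hx1]
    norm_cast
  have hG := Complex.Gamma_mul_Gamma_eq_betaIntegral
    (s := (a:ℂ)) (t := (b:ℂ)) (by simpa using ha) (by simpa using hb)
  rw [hbeta, show ((a:ℂ) + b) = ((a + b : ℝ) : ℂ) by push_cast; ring] at hG
  rw [Complex.Gamma_ofReal, Complex.Gamma_ofReal, Complex.Gamma_ofReal,
    ← Complex.ofReal_mul, ← Complex.ofReal_mul] at hG
  have h := Complex.ofReal_inj.mp hG
  have hpos : Real.Gamma (a + b) ≠ 0 := (Real.Gamma_pos_of_pos (by linarith)).ne'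
  field_simp
  linarith [h]

lemma intIoi (a b : ℝ) (ha : 0 < a) (hb : 0 < b) :
    ∫ u in Set.Ioi (0:ℝ), u ^ (a - 1) * (1 + u) ^ (-(a + b))
      = Real.Gamma a * Real.Gamma b / Real.Gamma (a + b) := by
  have hd : ∀ t ∈ Set.Ioo (0:ℝ) 1,
      HasDerivWithinAt (fun t : ℝ => t / (1 - t)) (((1 - t) ^ 2)⁻¹) (Set.Ioo 0 1) t := by
    intro t ht
    have h1 : (1:ℝ) - t ≠ 0 := (by linarith [ht.2] : (0:ℝ) < 1 - t).ne'
    have := (hasDerivAt_id t).div ((hasDerivAt_const t (1:ℝ)).sub (hasDerivAt_id t)) h1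
    refine this.hasDerivWithinAt.congr_deriv ?_
    simp only [Pi.sub_apply, id]
    field_simp
    ring
  have hinj : Set.InjOn (fun t : ℝ => t / (1 - t)) (Set.Ioo 0 1) := by
    intro x hx y hy h
    have hx1 : (1:ℝ) - x ≠ 0 := (by linarith [hx.2] : (0:ℝ) < 1 - x).ne'
    have hy1 : (1:ℝ) - y ≠ 0 := (by linarith [hy.2] : (0:ℝ) < 1 - y).ne'
    field_simp at h
    nlinarith [h]
  have himg : (fun t : ℝ => t / (1 - t)) '' Set.Ioo 0 1 = Set.Ioi 0 := by
    ext u; constructor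
    · rintro ⟨t, ht, rfl⟩
      exact div_pos ht.1 (by linarith [ht.2])
    · intro hu
      have hu' : (0:ℝ) < u := hu
      have h1 : (0:ℝ) < 1 + u := by linarith
      refine ⟨u / (1 + u), ⟨div_pos hu' h1, (div_lt_one h1).mpr (by linarith)⟩, ?_⟩
      field_simp
      ring
  have key := integral_image_eq_integral_abs_deriv_smul measurableSet_Ioo hd hinj
    (fun u => u ^ (a - 1) * (1 + u) ^ (-(a + b)))
  rw [himg] at key
  rw [key, ← realBeta a b ha hb]
  refine setIntegral_congr_fun measurableSet_Ioo fun t ht => ?_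
  have ht0 : 0 < t := ht.1
  have ht1 : 0 < 1 - t := by linarith [ht.2]
  have h2 : (1:ℝ) + t / (1 - t) = (1 - t)⁻¹ := by field_simp; ring
  have e1 : ((1 - t) ^ 2)⁻¹ = (1 - t) ^ (-2 : ℝ) := by
    rw [← Real.rpow_natCast (1 - t) 2, ← Real.rpow_neg ht1.le]
    norm_num
  have e2 : (t / (1 - t)) ^ (a - 1) = t ^ (a - 1) * (1 - t) ^ (-(a - 1)) := by
    rw [Real.div_rpow ht0.le ht1.le, Real.rpow_neg ht1.le, div_eq_mul_inv]
  have e3 : ((1 - t)⁻¹) ^ (-(a + b)) = (1 - t) ^ (a + b) := by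
    rw [← Real.rpow_neg_one, ← Real.rpow_mul ht1.le]
    norm_num
  rw [smul_eq_mul, abs_of_pos (by positivity), h2, e1, e2, e3]
  calc (1 - t) ^ (-2 : ℝ) * (t ^ (a - 1) * (1 - t) ^ (-(a - 1)) * (1 - t) ^ (a + b))
      = t ^ (a - 1) * ((1 - t) ^ (-2 : ℝ) * (1 - t) ^ (-(a - 1)) * (1 - t) ^ (a + b)) := by
        ring
    _ = t ^ (a - 1) * (1 - t) ^ (b - 1) := by
        rw [← Real.rpow_add ht1, ← Real.rpow_add ht1]
        congr 1
        ring

theorem stmt2 (q α : ℝ) (hα : 0 < α) (hq : α < q) :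
    ∫ r in Set.Ioi (0 : ℝ), (r / (1 + r ^ 2)) ^ q * r ^ (-(α + 1)) =
      Real.Gamma ((q - α) / 2) * Real.Gamma ((q + α) / 2) / (2 * Real.Gamma q) := by
  set a := (q - α) / 2 with hA
  set b := (q + α) / 2 with hB
  have ha0 : 0 < a := by rw [hA]; linarith
  have hb0 : 0 < b := by rw [hB]; linarith
  have hab : a + b = q := by rw [hA, hB]; ring
  have step : ∀ r ∈ Set.Ioi (0:ℝ), (r / (1 + r ^ 2)) ^ q * r ^ (-(α + 1))
      = ((2:ℝ) * r ^ ((2:ℝ) - 1)) •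
          ((2⁻¹:ℝ) • ((r ^ (2:ℝ)) ^ (a - 1) * (1 + r ^ (2:ℝ)) ^ (-(a + b)))) := by
    intro r hr
    have hr0 : (0:ℝ) < r := hr
    have hr2p : (0:ℝ) < 1 + r ^ 2 := by positivity
    have hr22 : r ^ (2:ℝ) = r ^ 2 := by
      rw [← Real.rpow_natCast r 2]; norm_num
    rw [smul_eq_mul, smul_eq_mul, ← Real.rpow_mul hr0.le, hr22, hab,
      show ((2:ℝ) - 1) = (1:ℝ) by norm_num, Real.rpow_one,
      Real.div_rpow hr0.le hr2p.le, div_eq_mul_inv, ← Real.rpow_neg hr2p.le]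
    have l2 : r ^ q * r ^ (-(α + 1)) = r ^ (2 * (a - 1)) * r := by
      have h1 : r ^ (2 * (a - 1)) * r = r ^ (2 * (a - 1)) * r ^ (1:ℝ) := by
        rw [Real.rpow_one]
      rw [h1, ← Real.rpow_add hr0, ← Real.rpow_add hr0]
      congr 1
      rw [hA]; ring
    rw [mul_right_comm, l2]
    ring
  rw [setIntegral_congr_fun measurableSet_Ioi step]
  have key := integral_comp_rpow_Ioi_of_pos
    (g := fun u => (2⁻¹:ℝ) • (u ^ (a - 1) * (1 + u) ^ (-(a + b))))
    (by norm_num : (0:ℝ) < 2)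
  simp only [smul_eq_mul] at key ⊢
  rw [key, MeasureTheory.integral_const_mul, intIoi a b ha0 hb0, hab]
  rw [div_eq_mul_inv, div_eq_mul_inv, mul_inv]
  ring
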